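/- Let f, g : Bool × Bool × Bool → Bool be local rules of elementary cellular automata and suppose f ≤ₖ g with witnessing encoding enc : Bool → Bool^k. Then for every t ≥ 1 and every Boolean sequence c of length l ≥ 2t + 1, one has ē(f̃^t(c)) = g̃^{kt}(ē(c)), where f̃^t is the t-fold iterate of the unravelling of f and g̃^{kt} is the (k·t)-fold iterate of the unravelling of g. -/

import Mathlib

/-- The unravelling of a local rule `f`: it maps a sequence `(b₁,…,bₙ)` (for `n ≥ 3`) to
`(f(b₁,b₂,b₃), f(b₂,b₃,b₄), …, f(b_{n-2},b_{n-1},bₙ))` of length `n - 2`. -/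
def unravel {S : Type*} (f : S × S × S → S) : List S → List S
  | a :: b :: c :: rest => f (a, b, c) :: unravel f (b :: c :: rest)
  | _ => []

/-- Entrywise encoding `ē`: replace each entry by its block and concatenate. -/
def ebar {S T : Type*} (e : S → List T) (c : List S) : List T :=
  (c.map e).flatten

/-- `f ≤ₖ g`: the ECA rule `f` is emulated by `g` with supercell size `k`. -/
def Emulates (f g : Bool × Bool × Bool → Bool) (k : ℕ) : Prop :=
  ∃ enc : Bool → List Bool, Function.Injective enc ∧ (∀ b, (enc b).length = k) ∧
    ∀ s₁ s₂ s₃ : Bool,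
      enc (f (s₁, s₂, s₃)) = (unravel g)^[k] (enc s₁ ++ enc s₂ ++ enc s₃)

lemma unravel_length {S : Type*} (f : S × S × S → S) :
    ∀ l : List S, (unravel f l).length = l.length - 2
  | [] => rfl
  | [_] => rfl
  | [_, _] => rfl
  | a :: b :: c :: rest => by
    simp [unravel, unravel_length f (b :: c :: rest)]

lemma iterate_unravel_length {S : Type*} (g : S × S × S → S) (n : ℕ) (l : List S) :
    ((unravel g)^[n] l).length = l.length - 2 * n := by
  induction n generalizing l with
  | zero => simp
  | succ n ih =>
    rw [Function.iterate_succ_apply, ih, unravel_length]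
    omega

lemma unravel_nil {S : Type*} (g : S × S × S → S) (l : List S) (h : l.length < 3) :
    unravel g l = [] := by
  match l, h with
  | [], _ => rfl
  | [_], _ => rfl
  | [_,_], _ => rfl

lemma unravel_take {S : Type*} (f : S × S × S → S) :
    ∀ (m : ℕ) (l : List S), unravel f (l.take (m+2)) = (unravel f l).take m
  | m, [] => by simp [unravel]
  | m, [a] => by simp [unravel]
  | m, [a, b] => by
      have : List.take (m+2) [a,b] = [a,b] := List.take_of_length_le (by simp)
      simp [this, unravel]
  | 0, a :: b :: c :: rest => by simp [unravel]
  | m+1, a :: b :: c :: rest => by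
      have h : (a :: b :: c :: rest).take (m+3) = a :: b :: (c :: rest).take (m+1) := rfl
      have h2 : (c :: rest).take (m+1) = c :: rest.take m := rfl
      rw [show m+1+2 = m+3 from rfl, h, h2]
      show f (a,b,c) :: unravel f (b :: c :: rest.take m) = _
      have : b :: c :: rest.take m = (b :: c :: rest).take (m+2) := rfl
      rw [this, unravel_take f m (b :: c :: rest)]
      rfl

lemma unravel_append {S : Type*} (g : S × S × S → S) :
    ∀ (xs ys : List S), 2 ≤ ys.length →
      unravel g (xs ++ ys) = unravel g (xs ++ ys.take 2) ++ unravel g ys := by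
  intro xs
  induction xs with
  | nil =>
    intro ys hy
    match ys, hy with
    | y1 :: y2 :: r, _ => simp [unravel]
  | cons x xs ih =>
    intro ys hy
    match ys, hy with
    | y1 :: y2 :: r, _ =>
      match xs with
      | [] => simp [unravel]
      | [x2] =>
        have := ih (y1 :: y2 :: r) (by simp)
        simp [unravel] at this ⊢
      | x2 :: x3 :: xs3 =>
        have := ih (y1 :: y2 :: r) (by simp)
        simp [unravel] at this ⊢
        exact this

lemma iterate_unravel_append {S : Type*} (g : S × S × S → S) (n : ℕ) :
    ∀ (xs ys : List S), 2 * n ≤ ys.length →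
      (unravel g)^[n] (xs ++ ys)
        = (unravel g)^[n] (xs ++ ys.take (2*n)) ++ (unravel g)^[n] ys := by
  induction n with
  | zero => intro xs ys h; simp
  | succ n ih =>
    intro xs ys h
    rw [Function.iterate_succ_apply, Function.iterate_succ_apply,
        Function.iterate_succ_apply]
    rw [unravel_append g xs ys (by omega)]
    rw [ih (unravel g (xs ++ ys.take 2)) (unravel g ys)
        (by rw [unravel_length]; omega)]
    congr 1
    rw [unravel_append g xs (ys.take (2*(n+1))) (by rw [List.length_take]; omega)]
    rw [ih (unravel g (xs ++ (ys.take (2*(n+1))).take 2)) (unravel g (ys.take (2*(n+1))))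
        (by rw [unravel_length, List.length_take]; omega)]
    have htt : (ys.take (2*(n+1))).take 2 = ys.take 2 := by
      rw [List.take_take]; congr 1
    have hut : unravel g (ys.take (2*(n+1))) = (unravel g ys).take (2*n) := by
      have : 2*(n+1) = 2*n + 2 := by ring
      rw [this, unravel_take]
    rw [htt, hut]
    have hlen : ((unravel g)^[n] ((unravel g ys).take (2*n))).length = 0 := by
      rw [iterate_unravel_length, List.length_take, unravel_length]; omega
    rw [List.eq_nil_of_length_eq_zero hlen, List.append_nil]
    simp [List.take_take]

section
variable {f g : Bool × Bool × Bool → Bool} {k : ℕ} {enc : Bool → List Bool}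

lemma step_lemma (henc_len : ∀ b, (enc b).length = k)
    (hwit : ∀ s₁ s₂ s₃ : Bool,
      enc (f (s₁, s₂, s₃)) = (unravel g)^[k] (enc s₁ ++ enc s₂ ++ enc s₃)) :
    ∀ c : List Bool, 3 ≤ c.length →
      ebar enc (unravel f c) = (unravel g)^[k] (ebar enc c)
  | a :: b :: d :: rest, _ => by
    have hebar : ebar enc (a :: b :: d :: rest)
        = enc a ++ (enc b ++ enc d ++ ebar enc (b :: d :: rest).tail.tail) := by
      simp [ebar, List.append_assoc]
    have hys : ebar enc (b :: d :: rest) = (enc b ++ enc d) ++ ebar enc rest := by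
      simp [ebar, List.append_assoc]
    have hyslen : 2 * k ≤ (ebar enc (b :: d :: rest)).length := by
      rw [hys]; simp [henc_len]; omega
    have hsplit := iterate_unravel_append g k (enc a) (ebar enc (b :: d :: rest)) hyslen
    have htake : (ebar enc (b :: d :: rest)).take (2*k) = enc b ++ enc d := by
      rw [hys, List.take_left' (by simp [henc_len]; ring)]
    have hc : ebar enc (a :: b :: d :: rest) = enc a ++ ebar enc (b :: d :: rest) := by
      simp [ebar]
    rw [hc, hsplit, htake, ← List.append_assoc, ← hwit a b d]
    show ebar enc (f (a,b,d) :: unravel f (b :: d :: rest)) = _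
    have : ebar enc (f (a,b,d) :: unravel f (b :: d :: rest))
        = enc (f (a,b,d)) ++ ebar enc (unravel f (b :: d :: rest)) := by simp [ebar]
    rw [this]
    congr 1
    match rest with
    | [] =>
      have h1 : unravel f [b, d] = [] := rfl
      have h2 : ((unravel g)^[k] (ebar enc [b, d])).length = 0 := by
        rw [iterate_unravel_length]
        simp [ebar, henc_len]
        omega
      rw [h1, List.eq_nil_of_length_eq_zero h2]; rfl
    | r :: rs =>
      exact step_lemma henc_len hwit (b :: d :: r :: rs) (by simp)

lemma main_aux (henc_len : ∀ b, (enc b).length = k)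
    (hwit : ∀ s₁ s₂ s₃ : Bool,
      enc (f (s₁, s₂, s₃)) = (unravel g)^[k] (enc s₁ ++ enc s₂ ++ enc s₃)) :
    ∀ (t : ℕ) (c : List Bool), 2 * t + 1 ≤ c.length →
      ebar enc ((unravel f)^[t] c) = (unravel g)^[k * t] (ebar enc c) := by
  intro t
  induction t with
  | zero => intro c h; simp
  | succ t ih =>
    intro c h
    rw [Function.iterate_succ_apply]
    rw [ih (unravel f c) (by rw [unravel_length]; omega)]
    rw [step_lemma henc_len hwit c (by omega)]
    rw [← Function.iterate_add_apply]
    congr 1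

end

/-- if `enc` witnesses `f ≤ₖ g`, then for every `t ≥ 1` and every configuration
`c` of length `l ≥ 2t + 1` one has `ē(f̃^t(c)) = g̃^{kt}(ē(c))`. -/
theorem stmt_1 (f g : Bool × Bool × Bool → Bool) (k : ℕ)
    (enc : Bool → List Bool)
    (henc_inj : Function.Injective enc)
    (henc_len : ∀ b, (enc b).length = k)
    (hwit : ∀ s₁ s₂ s₃ : Bool,
      enc (f (s₁, s₂, s₃)) = (unravel g)^[k] (enc s₁ ++ enc s₂ ++ enc s₃))
    (t : ℕ) (ht : 1 ≤ t)
    (c : List Bool) (hc : 2 * t + 1 ≤ c.length) :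
    ebar enc ((unravel f)^[t] c) = (unravel g)^[k * t] (ebar enc c) := by
  exact main_aux henc_len hwit t c hc
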